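/- For the estimator μ̂_{t,s}(x) = B_x P_x/(st) with independent B_x ~ Ber(s) and P_x ~ Poi(tμ(x)), the expected total variation distance satisfies E[TV(μ̂_{t,s}, μ)] ≤ 2(1−s)M(μ) + (s/√t)·Σ_{x∈X} √(μ(x)). -/

import Mathlib

open scoped BigOperators
open MeasureTheory ProbabilityTheory

/-- The `(p,C)`-Kantorovich-Rubinstein cost (the `p`-th power of the KR distance)
between finitely supported nonnegative measures, as an infimum over sub-couplings. -/
noncomputable def KRcost {X : Type*} [Fintype X] (d : X → X → ℝ) (p C : ℝ)
    (μ ν : X → ℝ) : ℝ :=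
  sInf { c : ℝ | ∃ π : X → X → ℝ, (∀ x y, 0 ≤ π x y) ∧
    (∀ x, (∑ y, π x y) ≤ μ x) ∧ (∀ y, (∑ x, π x y) ≤ ν y) ∧
    c = (∑ x, ∑ y, d x y ^ p * π x y)
      + C ^ p * ((∑ x, μ x + ∑ x, ν x) / 2 - ∑ x, ∑ y, π x y) }

/-- Total variation distance between finitely supported measures. -/
noncomputable def TV {X : Type*} [Fintype X] (μ ν : X → ℝ) : ℝ :=
  ∑ x, |μ x - ν x|

section tsums

lemma tsum0 (l : ℝ) : ∑' n : ℕ, l ^ n / n.factorial = Real.exp l := by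
  rw [Real.exp_eq_exp_ℝ, NormedSpace.exp_eq_tsum_div]

lemma psum0 (l : ℝ) : Summable (fun n : ℕ => l ^ n / n.factorial) :=
  Real.summable_pow_div_factorial l

lemma shift1 (l : ℝ) (n : ℕ) :
    (((n:ℕ)+1 : ℕ) : ℝ) * (l ^ (n+1) / ((n:ℕ)+1).factorial) = l * (l ^ n / n.factorial) := by
  rw [Nat.factorial_succ]
  have h1 : ((n:ℝ) + 1) ≠ 0 := by positivity
  have h2 : ((n.factorial : ℕ) : ℝ) ≠ 0 := Nat.cast_ne_zero.mpr n.factorial_ne_zero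
  push_cast
  field_simp
  ring

lemma psum1 (l : ℝ) : Summable (fun n : ℕ => (n : ℝ) * (l ^ n / n.factorial)) := by
  rw [← summable_nat_add_iff 1]
  have h : (fun n : ℕ => ((n + 1 : ℕ) : ℝ) * (l ^ (n+1) / (n+1).factorial))
      = fun n : ℕ => l * (l ^ n / n.factorial) := funext fun n => shift1 l n
  exact h ▸ (psum0 l).mul_left l

lemma tsum1 (l : ℝ) : ∑' n : ℕ, (n : ℝ) * (l ^ n / n.factorial) = l * Real.exp l := by
  rw [Summable.tsum_eq_zero_add (psum1 l)]
  simp only [Nat.cast_zero, zero_mul, zero_add]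
  rw [tsum_congr (fun n => shift1 l n), tsum_mul_left, tsum0]

lemma shift2 (l : ℝ) (n : ℕ) :
    (((n:ℕ)+1 : ℕ) : ℝ)^2 * (l ^ (n+1) / ((n:ℕ)+1).factorial)
      = l * ((n:ℝ) * (l ^ n / n.factorial)) + l * (l ^ n / n.factorial) := by
  rw [Nat.factorial_succ]
  have h1 : ((n:ℝ) + 1) ≠ 0 := by positivity
  have h2 : ((n.factorial : ℕ) : ℝ) ≠ 0 := Nat.cast_ne_zero.mpr n.factorial_ne_zero
  push_cast
  field_simp
  ring

lemma psum2 (l : ℝ) : Summable (fun n : ℕ => (n : ℝ)^2 * (l ^ n / n.factorial)) := by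
  rw [← summable_nat_add_iff 1]
  have h : (fun n : ℕ => ((n + 1 : ℕ) : ℝ)^2 * (l ^ (n+1) / (n+1).factorial))
      = fun n : ℕ => l * ((n:ℝ) * (l ^ n / n.factorial)) + l * (l ^ n / n.factorial) :=
    funext fun n => shift2 l n
  exact h ▸ (((psum1 l).mul_left l).add ((psum0 l).mul_left l))

lemma tsum2 (l : ℝ) :
    ∑' n : ℕ, (n : ℝ)^2 * (l ^ n / n.factorial) = l * (l * Real.exp l) + l * Real.exp l := by
  rw [Summable.tsum_eq_zero_add (psum2 l)]
  simp only [Nat.cast_zero, zero_pow, zero_mul, zero_add, ne_eq, OfNat.ofNat_ne_zero,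
    not_false_eq_true]
  rw [tsum_congr (fun n => shift2 l n),
    Summable.tsum_add ((psum1 l).mul_left l) ((psum0 l).mul_left l), tsum_mul_left, tsum_mul_left,
    tsum1, tsum0]

lemma psum_centered (l : ℝ) :
    Summable (fun n : ℕ => ((n:ℝ) - l)^2 * (l ^ n / n.factorial)) := by
  have h : (fun n : ℕ => ((n:ℝ) - l)^2 * (l ^ n / n.factorial))
      = fun n : ℕ => ((n:ℝ)^2 * (l ^ n / n.factorial) - (2*l) * ((n:ℝ) * (l ^ n / n.factorial)))
        + l^2 * (l ^ n / n.factorial) := funext fun n => by ring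
  exact h ▸ (((psum2 l).sub ((psum1 l).mul_left (2*l))).add ((psum0 l).mul_left (l^2)))

lemma tsum_centered (l : ℝ) :
    ∑' n : ℕ, ((n:ℝ) - l)^2 * (l ^ n / n.factorial) = l * Real.exp l := by
  have h : ∀ n : ℕ, ((n:ℝ) - l)^2 * (l ^ n / n.factorial)
      = ((n:ℝ)^2 * (l ^ n / n.factorial) - (2*l) * ((n:ℝ) * (l ^ n / n.factorial)))
        + l^2 * (l ^ n / n.factorial) := fun n => by ring
  rw [tsum_congr h,
    Summable.tsum_add ((psum2 l).sub ((psum1 l).mul_left (2*l))) ((psum0 l).mul_left (l^2)),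
    Summable.tsum_sub (psum2 l) ((psum1 l).mul_left (2*l)), tsum_mul_left, tsum_mul_left,
    tsum2, tsum1, tsum0]
  ring

end tsums




lemma lintegral_nat_valued {Ω : Type*} [MeasurableSpace Ω] (Pr : Measure Ω)
    (p : Ω → ℝ) (hp : Measurable p) (hnat : ∀ ω, ∃ n : ℕ, p ω = n)
    (g : ℝ → ℝ) :
    ∫⁻ ω, ENNReal.ofReal (g (p ω)) ∂Pr
      = ∑' n : ℕ, ENNReal.ofReal (g n) * Pr {ω | p ω = (n : ℝ)} := by
  have hA : ∀ n : ℕ, MeasurableSet {ω | p ω = (n:ℝ)} :=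
    fun n => hp (measurableSet_singleton _)
  have hU : (⋃ n : ℕ, {ω | p ω = (n:ℝ)}) = Set.univ := by
    ext ω
    simp only [Set.mem_iUnion, Set.mem_setOf_eq, Set.mem_univ, iff_true]
    exact hnat ω
  have hdisj : Pairwise (Function.onFun Disjoint (fun n : ℕ => {ω | p ω = (n:ℝ)})) := by
    intro m n hmn
    rw [Function.onFun, Set.disjoint_left]
    intro ω h1 h2
    rw [Set.mem_setOf_eq] at h1 h2
    exact hmn (Nat.cast_injective (h1.symm.trans h2))
  calc ∫⁻ ω, ENNReal.ofReal (g (p ω)) ∂Pr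
      = ∫⁻ ω in ⋃ n : ℕ, {ω | p ω = (n:ℝ)}, ENNReal.ofReal (g (p ω)) ∂Pr := by
        rw [hU, Measure.restrict_univ]
    _ = ∑' n : ℕ, ∫⁻ ω in {ω | p ω = (n:ℝ)}, ENNReal.ofReal (g (p ω)) ∂Pr :=
        lintegral_iUnion hA hdisj _
    _ = ∑' n : ℕ, ENNReal.ofReal (g n) * Pr {ω | p ω = (n:ℝ)} := by
        refine tsum_congr fun n => ?_
        have he : ∀ᵐ ω ∂Pr, ω ∈ {ω | p ω = (n:ℝ)} →
            ENNReal.ofReal (g (p ω)) = ENNReal.ofReal (g n) :=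
          ae_of_all _ (fun ω hω => by rw [show p ω = (n:ℝ) from hω])
        rw [setLIntegral_congr_fun_ae (hA n) he, setLIntegral_const]






section poisson

variable {Ω : Type*} [MeasurableSpace Ω] (Pr : Measure Ω)
  (p : Ω → ℝ) (l : ℝ)

lemma pmf_nonneg (hl : 0 ≤ l) (n : ℕ) : 0 ≤ Real.exp (-l) * l ^ n / n.factorial :=
  div_nonneg (mul_nonneg (Real.exp_pos _).le (pow_nonneg hl n)) (Nat.cast_nonneg _)

lemma hexp_cancel : Real.exp (-l) * Real.exp l = 1 := by
  rw [← Real.exp_add]; simp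

lemma poisson_lintegral_id (hp : Measurable p) (hnat : ∀ ω, ∃ n : ℕ, p ω = n)
    (hl : 0 ≤ l)
    (hPdist : ∀ n : ℕ, Pr {ω | p ω = (n:ℝ)}
      = ENNReal.ofReal (Real.exp (-l) * l ^ n / n.factorial)) :
    ∫⁻ ω, ENNReal.ofReal (p ω) ∂Pr = ENNReal.ofReal l := by
  have h := lintegral_nat_valued Pr p hp hnat (fun z => z)
  rw [h]
  have hterm : ∀ n : ℕ, (n:ℝ) * (Real.exp (-l) * l^n / n.factorial)
      = Real.exp (-l) * ((n:ℝ) * (l^n / n.factorial)) := fun n => by ring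
  have hsum : Summable (fun n : ℕ => (n:ℝ) * (Real.exp (-l) * l^n / n.factorial)) :=
    ((psum1 l).mul_left (Real.exp (-l))).congr (fun n => (hterm n).symm)
  have hnn : ∀ n : ℕ, 0 ≤ (n:ℝ) * (Real.exp (-l) * l^n / n.factorial) :=
    fun n => mul_nonneg (Nat.cast_nonneg n) (pmf_nonneg l hl n)
  calc ∑' n : ℕ, ENNReal.ofReal ((n:ℝ)) * Pr {ω | p ω = (n:ℝ)}
      = ∑' n : ℕ, ENNReal.ofReal ((n:ℝ) * (Real.exp (-l) * l^n / n.factorial)) := by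
        refine tsum_congr fun n => ?_
        rw [hPdist n, ← ENNReal.ofReal_mul (Nat.cast_nonneg n)]
    _ = ENNReal.ofReal (∑' n : ℕ, (n:ℝ) * (Real.exp (-l) * l^n / n.factorial)) :=
        (ENNReal.ofReal_tsum_of_nonneg hnn hsum).symm
    _ = ENNReal.ofReal l := by
        rw [tsum_congr hterm, tsum_mul_left, tsum1,
          show Real.exp (-l) * (l * Real.exp l) = (Real.exp (-l) * Real.exp l) * l by ring,
          hexp_cancel, one_mul]

lemma poisson_lintegral_absdev (hp : Measurable p) (hnat : ∀ ω, ∃ n : ℕ, p ω = n)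
    (hl : 0 ≤ l)
    (hPdist : ∀ n : ℕ, Pr {ω | p ω = (n:ℝ)}
      = ENNReal.ofReal (Real.exp (-l) * l ^ n / n.factorial)) :
    ∫⁻ ω, ENNReal.ofReal |p ω - l| ∂Pr ≤ ENNReal.ofReal (Real.sqrt l) := by
  rcases eq_or_lt_of_le hl with hl0 | hl0
  · have h := lintegral_nat_valued Pr p hp hnat (fun z => |z - l|)
    rw [h]
    have hz : ∀ n : ℕ, ENNReal.ofReal |(n:ℝ) - l| * Pr {ω | p ω = (n:ℝ)} = 0 := by
      intro n
      cases n with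
      | zero => simp [← hl0]
      | succ m =>
        rw [hPdist (m+1), ← hl0]
        simp [zero_pow (Nat.succ_ne_zero m)]
    rw [tsum_congr hz, tsum_zero]
    exact zero_le
  · have habs : ∀ z : ℝ, |z - l| ≤ ((z - l)^2 + l) / (2 * Real.sqrt l) := by
      intro z
      rw [le_div_iff₀ (by positivity)]
      nlinarith [sq_nonneg (|z - l| - Real.sqrt l), Real.sq_sqrt hl, sq_abs (z - l),
        abs_nonneg (z - l), Real.sqrt_nonneg l]
    have hgnn : ∀ n : ℕ, 0 ≤ (((n:ℝ) - l)^2 + l) / (2 * Real.sqrt l) :=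
      fun n => div_nonneg (by positivity) (by positivity)
    have hterm : ∀ n : ℕ,
        ((((n:ℝ) - l)^2 + l) / (2 * Real.sqrt l)) * (Real.exp (-l) * l^n / n.factorial)
        = (Real.exp (-l) / (2 * Real.sqrt l)) *
            (((n:ℝ) - l)^2 * (l^n / n.factorial) + l * (l^n / n.factorial)) := fun n => by ring
    have hsum : Summable (fun n : ℕ =>
        ((((n:ℝ) - l)^2 + l) / (2 * Real.sqrt l)) * (Real.exp (-l) * l^n / n.factorial)) :=
      (((psum_centered l).add ((psum0 l).mul_left l)).mul_left
        (Real.exp (-l) / (2 * Real.sqrt l))).congr (fun n => (hterm n).symm)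
    have hnn : ∀ n : ℕ, 0 ≤
        ((((n:ℝ) - l)^2 + l) / (2 * Real.sqrt l)) * (Real.exp (-l) * l^n / n.factorial) :=
      fun n => mul_nonneg (hgnn n) (pmf_nonneg l hl n)
    calc ∫⁻ ω, ENNReal.ofReal |p ω - l| ∂Pr
        ≤ ∫⁻ ω, ENNReal.ofReal (((p ω - l)^2 + l) / (2 * Real.sqrt l)) ∂Pr :=
          lintegral_mono fun ω => ENNReal.ofReal_le_ofReal (habs _)
      _ = ∑' n : ℕ, ENNReal.ofReal ((((n:ℝ) - l)^2 + l) / (2 * Real.sqrt l))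
            * Pr {ω | p ω = (n:ℝ)} := by
          have h := lintegral_nat_valued Pr p hp hnat
            (fun z => ((z - l)^2 + l) / (2 * Real.sqrt l))
          rw [h]
      _ = ∑' n : ℕ, ENNReal.ofReal
            (((((n:ℝ) - l)^2 + l) / (2 * Real.sqrt l)) * (Real.exp (-l) * l^n / n.factorial)) := by
          refine tsum_congr fun n => ?_
          rw [hPdist n, ← ENNReal.ofReal_mul (hgnn n)]
      _ = ENNReal.ofReal (∑' n : ℕ,
            ((((n:ℝ) - l)^2 + l) / (2 * Real.sqrt l)) * (Real.exp (-l) * l^n / n.factorial)) :=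
          (ENNReal.ofReal_tsum_of_nonneg hnn hsum).symm
      _ = ENNReal.ofReal (Real.sqrt l) := by
          congr 1
          rw [tsum_congr hterm, tsum_mul_left,
            Summable.tsum_add (psum_centered l) ((psum0 l).mul_left l), tsum_centered, tsum_mul_left,
            tsum0]
          have hs0 : Real.sqrt l ≠ 0 := ne_of_gt (Real.sqrt_pos.mpr hl0)
          have h1 : Real.exp (-l) / (2 * Real.sqrt l) * (l * Real.exp l + l * Real.exp l)
              = (Real.exp (-l) * Real.exp l) * (l / Real.sqrt l) := by
            field_simp
            ring
          rw [h1, hexp_cancel, one_mul, Real.div_sqrt]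

end poisson









theorem poisson_model_tv_bound {X : Type*} [Fintype X]
    {Ω : Type*} [MeasurableSpace Ω] (Pr : Measure Ω) [IsProbabilityMeasure Pr]
    (μ : X → ℝ) (hμ : ∀ x, 0 ≤ μ x)
    (t s : ℝ) (ht : 0 < t) (hs0 : 0 ≤ s) (hs1 : s ≤ 1)
    (B P : X → Ω → ℝ)
    (hBmeas : ∀ x, Measurable (B x)) (hPmeas : ∀ x, Measurable (P x))
    (hB1 : ∀ x, Pr {ω | B x ω = 1} = ENNReal.ofReal s)
    (hB0 : ∀ x, Pr {ω | B x ω = 0} = ENNReal.ofReal (1 - s))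
    (hPnat : ∀ x ω, ∃ n : ℕ, P x ω = n)
    (hPdist : ∀ x, ∀ n : ℕ, Pr {ω | P x ω = n}
      = ENNReal.ofReal (Real.exp (-(t * μ x)) * (t * μ x) ^ n / n.factorial))
    (hindep : iIndepFun (Sum.elim B P) Pr)
    (hInt : ∀ x, Integrable (fun ω => B x ω * P x ω) Pr) :
    (∫ ω, ∑ x, |B x ω * P x ω / (s * t) - μ x| ∂Pr)
      ≤ 2 * (1 - s) * (∑ x, μ x) + s / Real.sqrt t * ∑ x, Real.sqrt (μ x) := by
  have hfint : ∀ x : X, Integrable (fun ω => |B x ω * P x ω / (s * t) - μ x|) Pr :=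
    fun x => (((hInt x).div_const (s * t)).sub (integrable_const (μ x))).abs
  have key : ∀ x : X, (∫ ω, |B x ω * P x ω / (s * t) - μ x| ∂Pr)
      ≤ 2 * (1 - s) * μ x + s / Real.sqrt t * Real.sqrt (μ x) := by
    intro x
    by_cases hs : s = 0
    · have hconst : (fun ω => |B x ω * P x ω / (s * t) - μ x|) = fun _ => μ x := by
        funext ω
        rw [hs]
        simp [abs_of_nonneg (hμ x)]
      rw [hconst, integral_const]
      simp only [probReal_univ, one_smul, hs]
      have h1 : (0:ℝ) ≤ Real.sqrt t := Real.sqrt_nonneg t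
      have h2 : (0:ℝ) ≤ Real.sqrt (μ x) := Real.sqrt_nonneg _
      nlinarith [hμ x, div_nonneg (le_refl (0:ℝ)) h1]
    · have hspos : 0 < s := lt_of_le_of_ne hs0 (Ne.symm hs)
      have hst : 0 < s * t := mul_pos hspos ht
      set l := t * μ x with hl_def
      have hl : 0 ≤ l := mul_nonneg ht.le (hμ x)
      set b := B x with hb_def
      set p := P x with hp_def
      -- b is a.e. {0,1}-valued
      have hA : MeasurableSet {ω | b ω = 1} := hBmeas x (measurableSet_singleton 1)
      have hC : MeasurableSet {ω | b ω = 0} := hBmeas x (measurableSet_singleton 0)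
      have hdisjbc : Disjoint {ω | b ω = 1} {ω | b ω = 0} := by
        rw [Set.disjoint_left]
        intro ω h1 h0
        exact one_ne_zero ((Set.mem_setOf_eq ▸ h1).symm.trans (Set.mem_setOf_eq ▸ h0))
      have hunion : Pr ({ω | b ω = 1} ∪ {ω | b ω = 0}) = 1 := by
        rw [measure_union hdisjbc hC, hB1 x, hB0 x, ← ENNReal.ofReal_add hs0 (by linarith)]
        norm_num
      have hae : ∀ᵐ ω ∂Pr, b ω = 1 ∨ b ω = 0 := by
        have hcompl : Pr ({ω | b ω = 1} ∪ {ω | b ω = 0})ᶜ = 0 := by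
          rw [measure_compl (hA.union hC) (measure_ne_top _ _), hunion, measure_univ,
            tsub_self]
        have hsets : {ω | ¬(b ω = 1 ∨ b ω = 0)} = ({ω | b ω = 1} ∪ {ω | b ω = 0})ᶜ := by
          ext ω; simp [not_or]
        exact ae_iff.mpr (hsets ▸ hcompl)
      have hpnn : ∀ ω, 0 ≤ p ω := by
        intro ω
        obtain ⟨n, hn⟩ := hPnat x ω
        rw [hp_def, hn]
        exact Nat.cast_nonneg n
      -- independence
      have hIndepbp : IndepFun b p Pr :=
        hindep.indepFun (show (Sum.inl x : X ⊕ X) ≠ Sum.inr x by simp)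
      -- integrability and moments of p
      have hlint_p : ∫⁻ ω, ENNReal.ofReal (p ω) ∂Pr = ENNReal.ofReal l :=
        poisson_lintegral_id Pr p l (hPmeas x) (hPnat x) hl (fun n => hPdist x n)
      have hInt_p : Integrable p Pr := by
        refine ⟨(hPmeas x).aestronglyMeasurable, ?_⟩
        rw [hasFiniteIntegral_iff_ofReal (ae_of_all _ hpnn), hlint_p]
        exact ENNReal.ofReal_lt_top
      have hEp : ∫ ω, p ω ∂Pr = l := by
        rw [integral_eq_lintegral_of_nonneg_ae (ae_of_all _ hpnn)
          (hPmeas x).aestronglyMeasurable, hlint_p, ENNReal.toReal_ofReal hl]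
      have hint_abs : Integrable (fun ω => |p ω - l|) Pr :=
        (hInt_p.sub (integrable_const l)).abs
      have habsdev : ∫ ω, |p ω - l| ∂Pr ≤ Real.sqrt l := by
        have h1 := poisson_lintegral_absdev Pr p l (hPmeas x) (hPnat x) hl (fun n => hPdist x n)
        rw [integral_eq_lintegral_of_nonneg_ae (ae_of_all _ fun ω => abs_nonneg _)
          ((hPmeas x).sub_const l).abs.aestronglyMeasurable]
        calc (∫⁻ ω, ENNReal.ofReal |p ω - l| ∂Pr).toReal
            ≤ (ENNReal.ofReal (Real.sqrt l)).toReal :=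
              ENNReal.toReal_mono ENNReal.ofReal_ne_top h1
          _ = Real.sqrt l := ENNReal.toReal_ofReal (Real.sqrt_nonneg l)
      -- integrability and mean of b
      have hIntb : Integrable b Pr := by
        refine Integrable.mono' (integrable_const 1) (hBmeas x).aestronglyMeasurable ?_
        filter_upwards [hae] with ω hω
        rcases hω with h | h <;> rw [h] <;> norm_num
      have hEb : ∫ ω, b ω ∂Pr = s := by
        have hbe : b =ᵐ[Pr] Set.indicator {ω | b ω = 1} (fun _ => (1:ℝ)) := by
          filter_upwards [hae] with ω hω
          rcases hω with h | h
          · rw [h]; exact (Set.indicator_of_mem (show ω ∈ {ω | b ω = 1} from h) (fun _ => (1:ℝ))).symm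
          · rw [h]; exact (Set.indicator_of_notMem (show ω ∉ {ω | b ω = 1} by simp [h]) (fun _ => (1:ℝ))).symm
        rw [integral_congr_ae hbe, integral_indicator_const (1:ℝ) hA, measureReal_def, hB1 x,
          ENNReal.toReal_ofReal hs0, smul_eq_mul, mul_one]
      -- products
      have hEbp : ∫ ω, b ω * p ω ∂Pr = s * l := by
        rw [hIndepbp.integral_fun_mul_eq_mul_integral (hBmeas x).aestronglyMeasurable
          (hPmeas x).aestronglyMeasurable, hEb, hEp]
      have hψmeas : Measurable (fun z : ℝ => |z - l| / t) :=
        ((measurable_id.sub_const l).abs).div_const t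
      have hIndepbψ : IndepFun b (fun ω => |p ω - l| / t) Pr := by
        have := hIndepbp.comp measurable_id hψmeas
        exact this
      have hInt_ψ : Integrable (fun ω => |p ω - l| / t) Pr := hint_abs.div_const t
      have hEbψ : ∫ ω, b ω * (|p ω - l| / t) ∂Pr = s * ∫ ω, |p ω - l| / t ∂Pr := by
        rw [hIndepbψ.integral_fun_mul_eq_mul_integral (hBmeas x).aestronglyMeasurable
          (hψmeas.comp (hPmeas x)).aestronglyMeasurable, hEb]
      have hIntbψ : Integrable (fun ω => b ω * (|p ω - l| / t)) Pr := by
        refine Integrable.mono' hInt_ψ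
          ((hBmeas x).mul (hψmeas.comp (hPmeas x))).aestronglyMeasurable ?_
        filter_upwards [hae] with ω hω
        rcases hω with h | h <;> rw [h]
        · rw [one_mul, Real.norm_eq_abs, abs_div, abs_abs, abs_of_pos ht]
        · rw [zero_mul, norm_zero]
          exact div_nonneg (abs_nonneg _) ht.le
      -- integrable pieces of the bound
      have hg1 : Integrable (fun ω => (1 - b ω) * μ x) Pr :=
        ((integrable_const (1:ℝ)).sub hIntb).mul_const (μ x)
      have hg2 : Integrable (fun ω => (b ω * p ω) * ((1 - s) / (s * t))) Pr :=
        (hInt x).mul_const _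
      -- pointwise bound
      have hbound : ∀ᵐ ω ∂Pr, |b ω * p ω / (s * t) - μ x|
          ≤ (1 - b ω) * μ x + (b ω * p ω) * ((1 - s) / (s * t)) + b ω * (|p ω - l| / t) := by
        filter_upwards [hae] with ω hω
        rcases hω with h | h
        · rw [h]
          have hident : p ω / (s * t) - μ x = p ω * ((1 - s) / (s * t)) + (p ω - l) / t := by
            rw [hl_def]
            field_simp
            ring
          have h1 : 0 ≤ p ω * ((1 - s) / (s * t)) :=
            mul_nonneg (hpnn ω) (div_nonneg (by linarith) hst.le)
          calc |1 * p ω / (s * t) - μ x| = |p ω * ((1 - s) / (s * t)) + (p ω - l) / t| := by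
                rw [one_mul, hident]
            _ ≤ |p ω * ((1 - s) / (s * t))| + |(p ω - l) / t| := abs_add_le _ _
            _ = p ω * ((1 - s) / (s * t)) + |p ω - l| / t := by
                rw [abs_of_nonneg h1, abs_div, abs_of_pos ht]
            _ ≤ (1 - 1) * μ x + (1 * p ω) * ((1 - s) / (s * t)) + 1 * (|p ω - l| / t) := by
                rw [one_mul, one_mul]
                linarith
        · rw [h]
          simp [abs_of_nonneg (hμ x)]
      -- putting it together
      have hmono : ∫ ω, |b ω * p ω / (s * t) - μ x| ∂Pr
          ≤ ∫ ω, ((1 - b ω) * μ x + (b ω * p ω) * ((1 - s) / (s * t))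
              + b ω * (|p ω - l| / t)) ∂Pr :=
        integral_mono_ae (hfint x) ((hg1.add hg2).add hIntbψ) hbound
      have hsplit : ∫ ω, ((1 - b ω) * μ x + (b ω * p ω) * ((1 - s) / (s * t))
            + b ω * (|p ω - l| / t)) ∂Pr
          = (1 - s) * μ x + (s * l) * ((1 - s) / (s * t)) + s * ∫ ω, |p ω - l| / t ∂Pr := by
        have e1 : ∫ ω, ((1 - b ω) * μ x + (b ω * p ω) * ((1 - s) / (s * t))
              + b ω * (|p ω - l| / t)) ∂Pr
            = (∫ ω, ((1 - b ω) * μ x + (b ω * p ω) * ((1 - s) / (s * t))) ∂Pr)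
              + ∫ ω, b ω * (|p ω - l| / t) ∂Pr := integral_add (hg1.add hg2) hIntbψ
        have e2 : ∫ ω, ((1 - b ω) * μ x + (b ω * p ω) * ((1 - s) / (s * t))) ∂Pr
            = (∫ ω, (1 - b ω) * μ x ∂Pr) + ∫ ω, (b ω * p ω) * ((1 - s) / (s * t)) ∂Pr :=
          integral_add hg1 hg2
        rw [e1, e2, hEbψ]
        congr 1
        congr 1
        · rw [integral_mul_const, integral_sub (integrable_const (1:ℝ)) hIntb, hEb,
            integral_const]
          simp
        · rw [integral_mul_const, hEbp]
      have hval2 : (s * l) * ((1 - s) / (s * t)) = (1 - s) * μ x := by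
        rw [hl_def]
        field_simp
      have hval3 : s * ∫ ω, |p ω - l| / t ∂Pr ≤ s / Real.sqrt t * Real.sqrt (μ x) := by
        have h1 : ∫ ω, |p ω - l| / t ∂Pr = (∫ ω, |p ω - l| ∂Pr) / t := integral_div t _
        have hsq : Real.sqrt l / t = Real.sqrt (μ x) / Real.sqrt t := by
          rw [hl_def, Real.sqrt_mul ht.le, div_eq_div_iff (ne_of_gt ht) (ne_of_gt (Real.sqrt_pos.mpr ht))]
          linear_combination Real.sqrt (μ x) * Real.sq_sqrt ht.le
        calc s * ∫ ω, |p ω - l| / t ∂Pr ≤ s * (Real.sqrt l / t) := by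
              rw [h1]
              exact mul_le_mul_of_nonneg_left (div_le_div_of_nonneg_right habsdev ht.le)
                  hs0
          _ = s / Real.sqrt t * Real.sqrt (μ x) := by rw [hsq]; ring
      calc ∫ ω, |b ω * p ω / (s * t) - μ x| ∂Pr
          ≤ (1 - s) * μ x + (s * l) * ((1 - s) / (s * t)) + s * ∫ ω, |p ω - l| / t ∂Pr :=
            hmono.trans_eq hsplit
        _ ≤ (1 - s) * μ x + (1 - s) * μ x + s / Real.sqrt t * Real.sqrt (μ x) := by
            rw [hval2]
            linarith [hval3]
        _ = 2 * (1 - s) * μ x + s / Real.sqrt t * Real.sqrt (μ x) := by ring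
  rw [integral_finset_sum Finset.univ (fun x _ => hfint x)]
  calc ∑ x, ∫ ω, |B x ω * P x ω / (s * t) - μ x| ∂Pr
      ≤ ∑ x, (2 * (1 - s) * μ x + s / Real.sqrt t * Real.sqrt (μ x)) :=
        Finset.sum_le_sum fun x _ => key x
    _ = 2 * (1 - s) * (∑ x, μ x) + s / Real.sqrt t * ∑ x, Real.sqrt (μ x) := by
        rw [Finset.sum_add_distrib, ← Finset.mul_sum, ← Finset.mul_sum]
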